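/- arXiv:1401.1381 — 2 statements merged into one kernel-verified Lean document; each statement's English description precedes it below -/
import Mathlib

section
/- The first four columns of the equivalent channel matrix of the 3D MIMO code are orthogonal to its ninth through twelfth columns: ⟨h_j,h_k⟩ = 0 for all j ∈ {1,2,3,4} and k ∈ {9,10,11,12} (for every channel matrix H ∈ ℂ^{2×4}). -/
noncomputable section

open scoped InnerProductSpace

namespace MIMO3D

/-- The Golden-code parameter θ = (1+√5)/2. -/
def goldenTheta : ℝ := (1 + Real.sqrt 5) / 2

/-- θ̄ = 1 − θ. -/
def goldenThetaBar : ℝ := 1 - goldenTheta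

/-- α = 1 + i(1−θ). -/
def alpha : ℂ := 1 + Complex.I * (1 - (goldenTheta : ℂ))

/-- ᾱ = 1 + i(1−θ̄). -/
def alphaBar : ℂ := 1 + Complex.I * (1 - (goldenThetaBar : ℂ))

/-- The 3D MIMO codeword matrix X(s), a 4×4 complex matrix built from the
eight information symbols s₁,…,s₈ (here 0-indexed as `s 0`,…,`s 7`). -/
def codeword (s : Fin 8 → ℂ) : Matrix (Fin 4) (Fin 4) ℂ :=
  ((Real.sqrt 5 : ℂ))⁻¹ •
  !![alpha * (s 0 + (goldenTheta : ℂ) * s 1),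
     alpha * (s 2 + (goldenTheta : ℂ) * s 3),
     -(starRingEnd ℂ alpha) * (starRingEnd ℂ (s 4) + (goldenTheta : ℂ) * starRingEnd ℂ (s 5)),
     -(starRingEnd ℂ alpha) * (starRingEnd ℂ (s 6) + (goldenTheta : ℂ) * starRingEnd ℂ (s 7));
     Complex.I * alphaBar * (s 2 + (goldenThetaBar : ℂ) * s 3),
     alphaBar * (s 0 + (goldenThetaBar : ℂ) * s 1),
     Complex.I * (starRingEnd ℂ alphaBar) * (starRingEnd ℂ (s 6) + (goldenThetaBar : ℂ) * starRingEnd ℂ (s 7)),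
     -(starRingEnd ℂ alphaBar) * (starRingEnd ℂ (s 4) + (goldenThetaBar : ℂ) * starRingEnd ℂ (s 5));
     alpha * (s 4 + (goldenTheta : ℂ) * s 5),
     alpha * (s 6 + (goldenTheta : ℂ) * s 7),
     (starRingEnd ℂ alpha) * (starRingEnd ℂ (s 0) + (goldenTheta : ℂ) * starRingEnd ℂ (s 1)),
     (starRingEnd ℂ alpha) * (starRingEnd ℂ (s 2) + (goldenTheta : ℂ) * starRingEnd ℂ (s 3));
     Complex.I * alphaBar * (s 6 + (goldenThetaBar : ℂ) * s 7),
     alphaBar * (s 4 + (goldenThetaBar : ℂ) * s 5),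
     -(Complex.I * (starRingEnd ℂ alphaBar) * (starRingEnd ℂ (s 2) + (goldenThetaBar : ℂ) * starRingEnd ℂ (s 3))),
     (starRingEnd ℂ alphaBar) * (starRingEnd ℂ (s 0) + (goldenThetaBar : ℂ) * starRingEnd ℂ (s 1))]

/-- ṽ(Y): stack the columns of the 2×4 complex matrix Y into ℂ^8
(giving (Y₁₁,Y₂₁,Y₁₂,Y₂₂,Y₁₃,Y₂₃,Y₁₄,Y₂₄)) and replace each complex entry z
by the pair (Re z, Im z), producing a vector of ℝ^16 (Euclidean space). -/
def tildeVec (Y : Matrix (Fin 2) (Fin 4) ℂ) : EuclideanSpace ℝ (Fin 16) :=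
  WithLp.toLp 2 fun m : Fin 16 =>
    if m.val % 2 = 0 then
      (Y ⟨m.val % 4 / 2, by omega⟩ ⟨m.val / 4, by have := m.isLt; omega⟩).re
    else
      (Y ⟨m.val % 4 / 2, by omega⟩ ⟨m.val / 4, by have := m.isLt; omega⟩).im

/-- Recover the complex symbol vector s ∈ ℂ^8 from its real coordinate vector
s̃ = (Re s₁, Im s₁, …, Re s₈, Im s₈) ∈ ℝ^16. -/
def sOfReal (v : Fin 16 → ℝ) : Fin 8 → ℂ :=
  fun k => (v ⟨2 * k.val, by have := k.isLt; omega⟩ : ℂ)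
    + (v ⟨2 * k.val + 1, by have := k.isLt; omega⟩ : ℂ) * Complex.I

/-- The j-th column h_j (0-indexed: `hcol H j` is h_{j+1} of the paper) of the
equivalent channel matrix H_eq: the image of the j-th standard basis vector of
ℝ^16 under the ℝ-linear map s̃ ↦ ṽ(H · X(s)). -/
def hcol (H : Matrix (Fin 2) (Fin 4) ℂ) (j : Fin 16) : EuclideanSpace ℝ (Fin 16) :=
  tildeVec (H * codeword (sOfReal (Pi.single j 1)))

/-- The Gram–Schmidt residual r_j (0-indexed) of the columns of H_eq:
r_j = h_j − Σ_{k<j} ⟨q_k, h_j⟩ q_k. -/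
def rvec (H : Matrix (Fin 2) (Fin 4) ℂ) (j : Fin 16) : EuclideanSpace ℝ (Fin 16) :=
  have : WellFoundedLT (Fin 16) := inferInstance
  InnerProductSpace.gramSchmidt ℝ (hcol H) j

/-- The Gram–Schmidt orthonormalization q_j = r_j / ‖r_j‖ (0-indexed). -/
def qvec (H : Matrix (Fin 2) (Fin 4) ℂ) (j : Fin 16) : EuclideanSpace ℝ (Fin 16) :=
  have : WellFoundedLT (Fin 16) := inferInstance
  InnerProductSpace.gramSchmidtNormed ℝ (hcol H) j


open scoped Matrix in
lemma inner_tildeVec (A B : Matrix (Fin 2) (Fin 4) ℂ) :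
    ⟪tildeVec A, tildeVec B⟫_ℝ = (Matrix.trace (A * Bᴴ)).re := by
  rw [PiLp.inner_apply]
  simp only [Fin.sum_univ_succ, Fin.sum_univ_zero, RCLike.inner_apply, starRingEnd_apply,
    star_trivial, tildeVec, PiLp.toLp_apply]
  norm_num
  simp only [Matrix.trace, Matrix.diag_apply, Matrix.mul_apply, Matrix.conjTranspose_apply,
    Fin.sum_univ_four, Fin.sum_univ_two]
  simp [Complex.add_re, Complex.mul_re, mul_comm]
  ring

open scoped Matrix in
set_option maxHeartbeats 4000000 in
lemma skewAux (s t : Fin 8 → ℂ) (hs2 : s 2 = 0) (hs3 : s 3 = 0) (hs4 : s 4 = 0) (hs5 : s 5 = 0)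
    (hs6 : s 6 = 0) (hs7 : s 7 = 0) (ht0 : t 0 = 0) (ht1 : t 1 = 0) (ht2 : t 2 = 0)
    (ht3 : t 3 = 0) (ht6 : t 6 = 0) (ht7 : t 7 = 0) :
    ((codeword s * (codeword t)ᴴ)ᴴ) 0 0 = (-(codeword s * (codeword t)ᴴ)) 0 0
    ∧ ((codeword s * (codeword t)ᴴ)ᴴ) 0 1 = (-(codeword s * (codeword t)ᴴ)) 0 1
    ∧ ((codeword s * (codeword t)ᴴ)ᴴ) 0 2 = (-(codeword s * (codeword t)ᴴ)) 0 2
    ∧ ((codeword s * (codeword t)ᴴ)ᴴ) 0 3 = (-(codeword s * (codeword t)ᴴ)) 0 3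
    ∧ ((codeword s * (codeword t)ᴴ)ᴴ) 1 0 = (-(codeword s * (codeword t)ᴴ)) 1 0
    ∧ ((codeword s * (codeword t)ᴴ)ᴴ) 1 1 = (-(codeword s * (codeword t)ᴴ)) 1 1
    ∧ ((codeword s * (codeword t)ᴴ)ᴴ) 1 2 = (-(codeword s * (codeword t)ᴴ)) 1 2
    ∧ ((codeword s * (codeword t)ᴴ)ᴴ) 1 3 = (-(codeword s * (codeword t)ᴴ)) 1 3
    ∧ ((codeword s * (codeword t)ᴴ)ᴴ) 2 0 = (-(codeword s * (codeword t)ᴴ)) 2 0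
    ∧ ((codeword s * (codeword t)ᴴ)ᴴ) 2 1 = (-(codeword s * (codeword t)ᴴ)) 2 1
    ∧ ((codeword s * (codeword t)ᴴ)ᴴ) 2 2 = (-(codeword s * (codeword t)ᴴ)) 2 2
    ∧ ((codeword s * (codeword t)ᴴ)ᴴ) 2 3 = (-(codeword s * (codeword t)ᴴ)) 2 3
    ∧ ((codeword s * (codeword t)ᴴ)ᴴ) 3 0 = (-(codeword s * (codeword t)ᴴ)) 3 0
    ∧ ((codeword s * (codeword t)ᴴ)ᴴ) 3 1 = (-(codeword s * (codeword t)ᴴ)) 3 1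
    ∧ ((codeword s * (codeword t)ᴴ)ᴴ) 3 2 = (-(codeword s * (codeword t)ᴴ)) 3 2
    ∧ ((codeword s * (codeword t)ᴴ)ᴴ) 3 3 = (-(codeword s * (codeword t)ᴴ)) 3 3 := by
  refine ⟨?_, ?_, ?_, ?_, ?_, ?_, ?_, ?_, ?_, ?_, ?_, ?_, ?_, ?_, ?_, ?_⟩ <;>
  · simp only [codeword, Matrix.smul_apply, Matrix.conjTranspose_apply, Matrix.neg_apply,
      Matrix.mul_apply, Fin.sum_univ_four, Matrix.of_apply, Matrix.cons_val', Matrix.cons_val_zero,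
      Matrix.cons_val_one, Matrix.cons_val_two, Matrix.cons_val_three, Matrix.head_cons,
      Matrix.tail_cons, Matrix.head_fin_const, Matrix.cons_val_fin_one,
      Matrix.empty_val', smul_eq_mul, map_add, map_mul, map_neg, map_zero,
      map_one, Complex.conj_conj, Complex.conj_I, Complex.conj_ofReal, map_inv₀,
      alpha, alphaBar, goldenThetaBar, Complex.ofReal_sub, Complex.ofReal_one, map_sub,
      Fin.isValue, hs2, hs3, hs4, hs5, hs6, hs7, ht0, ht1, ht2, ht3, ht6, ht7,
      mul_zero, zero_mul, add_zero, zero_add, neg_zero]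
    ring_nf
    simp [Complex.ext_iff]
    try ring_nf
    try simp

open scoped Matrix in
lemma skew (s t : Fin 8 → ℂ) (hs2 : s 2 = 0) (hs3 : s 3 = 0) (hs4 : s 4 = 0) (hs5 : s 5 = 0)
    (hs6 : s 6 = 0) (hs7 : s 7 = 0) (ht0 : t 0 = 0) (ht1 : t 1 = 0) (ht2 : t 2 = 0)
    (ht3 : t 3 = 0) (ht6 : t 6 = 0) (ht7 : t 7 = 0) :
    (codeword s * (codeword t)ᴴ)ᴴ = -(codeword s * (codeword t)ᴴ) := by
  obtain ⟨h1,h2,h3,h4,h5,h6,h7,h8,h9,h10,h11,h12,h13,h14,h15,h16⟩ :=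
    skewAux s t hs2 hs3 hs4 hs5 hs6 hs7 ht0 ht1 ht2 ht3 ht6 ht7
  ext p q
  fin_cases p <;> fin_cases q <;> assumption

open scoped Matrix in
lemma reTrace (H : Matrix (Fin 2) (Fin 4) ℂ) (X1 X2 : Matrix (Fin 4) (Fin 4) ℂ)
    (h : (X1 * X2ᴴ)ᴴ = -(X1 * X2ᴴ)) :
    (Matrix.trace ((H * X1) * (H * X2)ᴴ)).re = 0 := by
  have e : (H * X1) * (H * X2)ᴴ = H * (X1 * X2ᴴ) * Hᴴ := by
    simp [Matrix.conjTranspose_mul, Matrix.mul_assoc]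
  have h2 : star (Matrix.trace ((H * X1) * (H * X2)ᴴ))
      = -(Matrix.trace ((H * X1) * (H * X2)ᴴ)) := by
    rw [e, ← Matrix.trace_conjTranspose]
    have h3 : (H * (X1 * X2ᴴ) * Hᴴ)ᴴ = -(H * (X1 * X2ᴴ) * Hᴴ) := by
      calc (H * (X1 * X2ᴴ) * Hᴴ)ᴴ = H * (X1 * X2ᴴ)ᴴ * Hᴴ := by
            simp [Matrix.conjTranspose_mul, Matrix.mul_assoc]
        _ = -(H * (X1 * X2ᴴ) * Hᴴ) := by rw [h]; simp
    rw [h3, Matrix.trace_neg]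
  have h4 := congrArg Complex.re h2
  simp only [Complex.neg_re] at h4
  have hstar : (star (Matrix.trace ((H * X1) * (H * X2)ᴴ))).re
      = (Matrix.trace ((H * X1) * (H * X2)ᴴ)).re := rfl
  rw [hstar] at h4
  linarith

end MIMO3D

open MIMO3D

/-- The first four columns of H_eq are orthogonal to its ninth
through twelfth columns: ⟨h_j,h_k⟩ = 0 for j ∈ {1,2,3,4}, k ∈ {9,…,12}
(paper's 1-based indices; here 0-indexed: j.val < 4 and 8 ≤ k.val < 12),
for every channel matrix H. -/
theorem stmt6 (H : Matrix (Fin 2) (Fin 4) ℂ) :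
    ∀ j k : Fin 16, j.val < 4 → 8 ≤ k.val → k.val < 12 →
      ⟪hcol H j, hcol H k⟫_ℝ = 0 := by
  intro j k hj h8 h12
  have key : ∀ s t : Fin 8 → ℂ, s 2 = 0 → s 3 = 0 → s 4 = 0 → s 5 = 0 → s 6 = 0 → s 7 = 0 →
      t 0 = 0 → t 1 = 0 → t 2 = 0 → t 3 = 0 → t 6 = 0 → t 7 = 0 →
      ⟪tildeVec (H * codeword s), tildeVec (H * codeword t)⟫_ℝ = 0 := by
    intro s t hs2 hs3 hs4 hs5 hs6 hs7 ht0 ht1 ht2 ht3 ht6 ht7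
    rw [inner_tildeVec]
    exact reTrace H _ _ (skew s t hs2 hs3 hs4 hs5 hs6 hs7 ht0 ht1 ht2 ht3 ht6 ht7)
  obtain ⟨jv, hjv⟩ := j; obtain ⟨kv, hkv⟩ := k
  simp only [Fin.val] at hj h8 h12
  unfold hcol
  interval_cases jv <;> interval_cases kv <;>
  · refine key _ _ ?_ ?_ ?_ ?_ ?_ ?_ ?_ ?_ ?_ ?_ ?_ ?_ <;>
      norm_num [sOfReal, Pi.single_apply, Fin.ext_iff,
        show ((2:Fin 8):ℕ) = 2 from rfl, show ((3:Fin 8):ℕ) = 3 from rfl,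
        show ((4:Fin 8):ℕ) = 4 from rfl, show ((5:Fin 8):ℕ) = 5 from rfl,
        show ((6:Fin 8):ℕ) = 6 from rfl, show ((7:Fin 8):ℕ) = 7 from rfl]
end
end

section
/- (Theorem 2) In the QR decomposition H_eq = QR of the equivalent channel matrix of the 3D MIMO code over a quasi-static channel, the 4×4 block R_13 of R is the null matrix; that is, ⟨q_j,h_k⟩ = 0 for all j ∈ {1,2,3,4} and k ∈ {9,10,11,12}. -/
noncomputable section

open scoped InnerProductSpace

open MIMO3D

open Matrix Complex

private lemma lemA (Y Z : Matrix (Fin 2) (Fin 4) ℂ) :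
    ⟪tildeVec Y, tildeVec Z⟫_ℝ = ((Yᴴ * Z).trace).re := by
  simp only [PiLp.inner_apply, PiLp.toLp_apply, RCLike.inner_apply, conj_trivial, tildeVec,
    Matrix.trace, Matrix.diag_apply, Matrix.mul_apply, Matrix.conjTranspose_apply,
    Fin.sum_univ_succ, Fin.sum_univ_zero, Fin.isValue]
  norm_num [Complex.add_re, Complex.mul_re, Complex.conj_re, Complex.conj_im]
  simp only [show ((2:Fin 4)) = ⟨2, by omega⟩ from rfl, show (Fin.succ 2 : Fin 4) = ⟨3, by omega⟩ from rfl]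
  ring

private lemma lemB (H : Matrix (Fin 2) (Fin 4) ℂ) (A B : Matrix (Fin 4) (Fin 4) ℂ)
    (h : (B * Aᴴ)ᴴ = -(B * Aᴴ)) : (((H * A)ᴴ * (H * B)).trace).re = 0 := by
  have e1 : ((H * A)ᴴ * (H * B)).trace = ((Hᴴ * H) * (B * Aᴴ)).trace := by
    rw [Matrix.conjTranspose_mul]
    rw [show Aᴴ * Hᴴ * (H * B) = Aᴴ * (Hᴴ * H * B) by
      rw [Matrix.mul_assoc, Matrix.mul_assoc]]
    rw [Matrix.trace_mul_comm, ← Matrix.mul_assoc, Matrix.mul_assoc]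
  have e2 : star (((Hᴴ * H) * (B * Aᴴ)).trace)
      = -(((Hᴴ * H) * (B * Aᴴ)).trace) := by
    rw [← Matrix.trace_conjTranspose, Matrix.conjTranspose_mul, h,
      Matrix.neg_mul, Matrix.trace_neg, Matrix.trace_mul_comm,
      Matrix.conjTranspose_mul, Matrix.conjTranspose_conjTranspose]
  rw [e1]
  have := congrArg Complex.re e2
  simp only [Complex.star_def, Complex.conj_re, Complex.neg_re] at this
  linarith

/-- diagonal-type matrix -/
private def dMat (a b δ : ℂ) : Matrix (Fin 4) (Fin 4) ℂ :=
  δ • !![a, 0, 0, 0; 0, b, 0, 0; 0, 0, starRingEnd ℂ a, 0; 0, 0, 0, starRingEnd ℂ b]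

/-- antidiagonal-type matrix -/
private def aMat (c e δ : ℂ) : Matrix (Fin 4) (Fin 4) ℂ :=
  δ • !![0, 0, -(starRingEnd ℂ c), 0; 0, 0, 0, -(starRingEnd ℂ e);
         c, 0, 0, 0; 0, e, 0, 0]

private lemma skew (a b c e δ : ℂ) :
    (aMat c e δ * (dMat a b δ)ᴴ)ᴴ = -(aMat c e δ * (dMat a b δ)ᴴ) := by
  ext i i'
  fin_cases i <;> fin_cases i' <;>
  · simp only [aMat, dMat, Matrix.mul_apply, Fin.sum_univ_four, Matrix.conjTranspose_apply,
      Matrix.smul_apply, Matrix.neg_apply, Matrix.of_apply, Matrix.cons_val',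
      Matrix.cons_val_zero, Matrix.cons_val_one, Matrix.head_cons, Matrix.cons_val_two,
      Matrix.cons_val_three, Matrix.tail_cons, Matrix.empty_val', Matrix.cons_val_fin_one,
      Matrix.head_fin_const, smul_eq_mul, Fin.isValue]
    norm_num [Complex.ext_iff, Complex.add_re, Complex.add_im, Complex.mul_re, Complex.mul_im,
      Complex.neg_re, Complex.neg_im, Complex.conj_re, Complex.conj_im]
    try constructor <;> ring

private lemma szero (j : Fin 16) (m : Fin 8)
    (h : ¬(j.val = 2*m.val ∨ j.val = 2*m.val+1)) : sOfReal (Pi.single j 1) m = 0 := by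
  simp only [sOfReal, Pi.single_apply]
  rw [if_neg (by simp only [Fin.ext_iff]; omega), if_neg (by simp only [Fin.ext_iff]; omega)]
  simp

private lemma repA (s : Fin 8 → ℂ) (h2 : s 2 = 0) (h3 : s 3 = 0) (h4 : s 4 = 0)
    (h5 : s 5 = 0) (h6 : s 6 = 0) (h7 : s 7 = 0) :
    codeword s = dMat (alpha * (s 0 + (goldenTheta:ℂ) * s 1))
      (alphaBar * (s 0 + (goldenThetaBar:ℂ) * s 1)) ((Real.sqrt 5 : ℂ))⁻¹ := by
  ext i i'
  fin_cases i <;> fin_cases i' <;>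
  · simp [codeword, dMat, h2, h3, h4, h5, h6, h7, map_add, _root_.map_mul,
      Complex.conj_ofReal]

private lemma repB (s : Fin 8 → ℂ) (h0 : s 0 = 0) (h1 : s 1 = 0) (h2 : s 2 = 0)
    (h3 : s 3 = 0) (h6 : s 6 = 0) (h7 : s 7 = 0) :
    codeword s = aMat (alpha * (s 4 + (goldenTheta:ℂ) * s 5))
      (alphaBar * (s 4 + (goldenThetaBar:ℂ) * s 5)) ((Real.sqrt 5 : ℂ))⁻¹ := by
  ext i i'
  fin_cases i <;> fin_cases i' <;>
  · simp [codeword, aMat, h0, h1, h2, h3, h6, h7, map_add, _root_.map_mul,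
      Complex.conj_ofReal]

private lemma inner_hcol (H : Matrix (Fin 2) (Fin 4) ℂ) (j k : Fin 16)
    (hj : j.val < 4) (hk1 : 8 ≤ k.val) (hk2 : k.val < 12) :
    ⟪hcol H j, hcol H k⟫_ℝ = 0 := by
  rw [hcol, hcol, lemA,
    repA (sOfReal (Pi.single j 1)) (szero j 2 (by omega)) (szero j 3 (by omega))
      (szero j 4 (by omega)) (szero j 5 (by omega)) (szero j 6 (by omega))
      (szero j 7 (by omega)),
    repB (sOfReal (Pi.single k 1)) (szero k 0 (by omega)) (szero k 1 (by omega))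
      (szero k 2 (by omega)) (szero k 3 (by omega)) (szero k 6 (by omega))
      (szero k 7 (by omega))]
  exact lemB H _ _ (skew _ _ _ _ _)

theorem stmt7' (H : Matrix (Fin 2) (Fin 4) ℂ) :
    ∀ j k : Fin 16, j.val < 4 → 8 ≤ k.val → k.val < 12 →
      ⟪qvec H j, hcol H k⟫_ℝ = 0 := by
  intro j k hj hk1 hk2
  have key : ∀ i : Fin 16, i ≤ j → ⟪hcol H i, hcol H k⟫_ℝ = 0 := fun i hi =>
    inner_hcol H i k (lt_of_le_of_lt hi hj) hk1 hk2
  have hq : qvec H j ∈ Submodule.span ℝ (hcol H '' Set.Iic j) := by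
    letI inst : WellFoundedLT (Fin 16) := inferInstance
    have hmem : InnerProductSpace.gramSchmidt ℝ (hcol H) j ∈ Submodule.span ℝ (hcol H '' Set.Iic j) :=
      InnerProductSpace.gramSchmidt_mem_span ℝ (hcol H) le_rfl
    simp only [qvec, InnerProductSpace.gramSchmidtNormed]
    exact Submodule.smul_mem _ _ hmem
  refine Submodule.span_induction ?_ ?_ ?_ ?_ hq
  · rintro _ ⟨i, hi, rfl⟩; exact key i hi
  · exact inner_zero_left _
  · intro x y _ _ hx hy; rw [inner_add_left, hx, hy, add_zero]
  · intro r x _ hx; rw [real_inner_smul_left, hx, mul_zero]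
/-- Theorem 2: The 4×4 block R₁₃ of R is the null matrix:
⟨q_j,h_k⟩ = 0 for all j ∈ {1,2,3,4} and k ∈ {9,…,12} (paper's 1-based indices;
here 0-indexed: j.val < 4 and 8 ≤ k.val < 12). -/
theorem stmt7 (H : Matrix (Fin 2) (Fin 4) ℂ) (hLI : LinearIndependent ℝ (hcol H)) :
    ∀ j k : Fin 16, j.val < 4 → 8 ≤ k.val → k.val < 12 →
      ⟪qvec H j, hcol H k⟫_ℝ = 0 := by
  exact stmt7' H
end
end
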